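/- Fix ε > 0. For every non-empty closed interval P ⊆ (0, e^{−ε}) there exists a pair (p⋆, λ⋆) ∈ P × (0,∞) such that Δ_ε(p⋆, λ⋆) = inf_{λ ∈ (0,∞)} Δ_ε(p⋆, λ) = sup_{p ∈ P} Δ_ε(p, λ⋆) = ω(p⋆, ε). -/

import Mathlib

open Real

/-- Bernoulli Kullback–Leibler divergence `kl(a‖b)`. -/
noncomputable def klBer (a b : ℝ) : ℝ :=
  a * Real.log (a / b) + (1 - a) * Real.log ((1 - a) / (1 - b))

/-- `ω(p, ε)`. -/
noncomputable def omegaKL (p ε : ℝ) : ℝ :=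
  if p = 0 then 0
  else if p ≤ Real.exp (-ε) then
    sInf {η : ℝ | η ∈ Set.Icc 0 (1 - p) ∧ klBer (p + η) p = ε}
  else 1 - p

/-- `Δ_ε(r, λ) = (log(1+λ) + ε)/log(1 + λ/r) - r`. -/
noncomputable def DeltaEps (ε r lam : ℝ) : ℝ :=
  (Real.log (1 + lam) + ε) / Real.log (1 + lam / r) - r

/-- nice expression -/
noncomputable def klf (p q : ℝ) : ℝ :=
  q * Real.log q - q * Real.log p + (1 - q) * Real.log (1 - q) - (1 - q) * Real.log (1 - p)

lemma klBer_eq_klf {p q : ℝ} (hp : 0 < p) (hp1 : p < 1) (hq : 0 < q) (hq1 : q ≤ 1) :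
    klBer q p = klf p q := by
  unfold klBer klf
  rcases eq_or_lt_of_le hq1 with h1 | h1
  · subst h1
    rw [Real.log_div (by norm_num) (ne_of_gt hp)]
    norm_num
  · rw [Real.log_div (ne_of_gt hq) (ne_of_gt hp),
      Real.log_div (by linarith) (by linarith)]
    ring

lemma klf_continuousOn (p : ℝ) : Continuous (klf p) := by
  unfold klf
  have h1 : Continuous fun q : ℝ => q * Real.log q := Real.continuous_mul_log
  have h2 : Continuous fun q : ℝ => (1 - q) * Real.log (1 - q) :=
    Real.continuous_mul_log.comp (continuous_const.sub continuous_id)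
  fun_prop

lemma klf_hasDerivAt {p q : ℝ} (hq : 0 < q) (hq1 : q < 1) :
    HasDerivAt (klf p) (Real.log q - Real.log p - Real.log (1 - q) + Real.log (1 - p)) q := by
  have h1 : HasDerivAt (fun x : ℝ => x * Real.log x) (Real.log q + 1) q :=
    Real.hasDerivAt_mul_log (ne_of_gt hq)
  have h2 : HasDerivAt (fun x : ℝ => (1 - x) * Real.log (1 - x)) (-(Real.log (1 - q) + 1)) q := by
    have := (Real.hasDerivAt_mul_log (x := 1 - q) (by linarith)).comp q
      ((hasDerivAt_id q).const_sub 1)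
    simpa [Function.comp_def] using this
  have h3 : HasDerivAt (fun x : ℝ => x * Real.log p) (Real.log p) q := by
    simpa using (hasDerivAt_id q).mul_const (Real.log p)
  have h4 : HasDerivAt (fun x : ℝ => (1 - x) * Real.log (1 - p)) (-Real.log (1 - p)) q := by
    simpa using ((hasDerivAt_id q).const_sub 1).mul_const (Real.log (1 - p))
  have H := ((h1.sub h3).add h2).sub h4
  have heq : klf p = fun x : ℝ =>
      (x * Real.log x - x * Real.log p + (1 - x) * Real.log (1 - x)) - (1 - x) * Real.log (1 - p) := by
    funext x; unfold klf; ring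
  rw [heq]
  refine H.congr_deriv ?_
  ring

lemma klf_strictMonoOn {p : ℝ} (hp : 0 < p) (hp1 : p < 1) :
    StrictMonoOn (klf p) (Set.Icc p 1) := by
  apply strictMonoOn_of_deriv_pos (convex_Icc p 1) (klf_continuousOn p).continuousOn
  intro x hx
  rw [interior_Icc] at hx
  obtain ⟨hx1, hx2⟩ := hx
  rw [(klf_hasDerivAt (lt_trans hp hx1) hx2).deriv]
  have l1 : Real.log p < Real.log x := Real.log_lt_log hp hx1
  have l2 : Real.log (1 - x) < Real.log (1 - p) := Real.log_lt_log (by linarith) (by linarith)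
  linarith

lemma klf_self {p : ℝ} : klf p p = 0 := by unfold klf; ring

lemma klf_one {p : ℝ} : klf p 1 = -Real.log p := by
  unfold klf; simp


lemma exists_root {ε p : ℝ} (hε : 0 < ε) (hp : 0 < p) (hpe : p < Real.exp (-ε)) :
    ∃ q ∈ Set.Ioo p 1, klf p q = ε := by
  have hp1 : p < 1 := lt_trans hpe (by rw [Real.exp_lt_one_iff]; linarith)
  have hmem : ε ∈ Set.Icc (klf p p) (klf p 1) := by
    rw [klf_self, klf_one]
    constructor
    · linarith
    · have : Real.log p < -ε := by
        have := Real.log_lt_log hp hpe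
        rwa [Real.log_exp] at this
      linarith
  obtain ⟨q, hq, hq2⟩ := intermediate_value_Icc (le_of_lt hp1) (klf_continuousOn p).continuousOn hmem
  refine ⟨q, ⟨?_, ?_⟩, hq2⟩
  · rcases eq_or_lt_of_le hq.1 with h | h
    · exfalso; rw [← h, klf_self] at hq2; linarith
    · exact h
  · rcases eq_or_lt_of_le hq.2 with h | h
    · exfalso
      rw [h, klf_one] at hq2
      have : Real.log p < -ε := by
        have := Real.log_lt_log hp hpe
        rwa [Real.log_exp] at this
      linarith
    · exact h

/-- the root `q(p)` -/
noncomputable def qr (ε p : ℝ) : ℝ := sInf {q | q ∈ Set.Icc p 1 ∧ klf p q = ε}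

lemma root_set_eq {ε p : ℝ} (hε : 0 < ε) (hp : 0 < p) (hpe : p < Real.exp (-ε)) :
    ∃ q0 ∈ Set.Ioo p 1, klf p q0 = ε ∧
      {q | q ∈ Set.Icc p 1 ∧ klf p q = ε} = {q0} := by
  have hp1 : p < 1 := lt_trans hpe (by rw [Real.exp_lt_one_iff]; linarith)
  obtain ⟨q0, hq0, hq0e⟩ := exists_root hε hp hpe
  refine ⟨q0, hq0, hq0e, ?_⟩
  ext q
  simp only [Set.mem_setOf_eq, Set.mem_singleton_iff]
  constructor
  · rintro ⟨hq, hqe⟩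
    exact (klf_strictMonoOn hp hp1).injOn hq
      (Set.mem_Icc.2 ⟨le_of_lt hq0.1, le_of_lt hq0.2⟩) (by rw [hqe, hq0e])
  · rintro rfl
    exact ⟨Set.mem_Icc.2 ⟨le_of_lt hq0.1, le_of_lt hq0.2⟩, hq0e⟩

lemma qr_spec {ε p : ℝ} (hε : 0 < ε) (hp : 0 < p) (hpe : p < Real.exp (-ε)) :
    qr ε p ∈ Set.Ioo p 1 ∧ klf p (qr ε p) = ε := by
  obtain ⟨q0, h1, h2, h3⟩ := root_set_eq hε hp hpe
  have : qr ε p = q0 := by rw [qr, h3, csInf_singleton]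
  rw [this]; exact ⟨h1, h2⟩

lemma omegaKL_eq {ε p : ℝ} (hε : 0 < ε) (hp : 0 < p) (hpe : p < Real.exp (-ε)) :
    omegaKL p ε = qr ε p - p := by
  have hp1 : p < 1 := lt_trans hpe (by rw [Real.exp_lt_one_iff]; linarith)
  obtain ⟨hq, hqe⟩ := qr_spec hε hp hpe
  rw [omegaKL, if_neg (ne_of_gt hp), if_pos (le_of_lt hpe)]
  have hset : {η : ℝ | η ∈ Set.Icc 0 (1 - p) ∧ klBer (p + η) p = ε} = {qr ε p - p} := by
    obtain ⟨q0, h1, h2, h3⟩ := root_set_eq hε hp hpe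
    have hq0 : qr ε p = q0 := by rw [qr, h3, csInf_singleton]
    ext η
    simp only [Set.mem_setOf_eq, Set.mem_singleton_iff, Set.mem_Icc]
    constructor
    · rintro ⟨⟨hη1, hη2⟩, hηe⟩
      have hmem : p + η ∈ {q | q ∈ Set.Icc p 1 ∧ klf p q = ε} := by
        refine ⟨Set.mem_Icc.2 ⟨by linarith, by linarith⟩, ?_⟩
        rw [← klBer_eq_klf hp hp1 (by linarith) (by linarith)]
        exact hηe
      rw [h3, Set.mem_singleton_iff] at hmem
      rw [hq0]; linarith
    · rintro rfl
      refine ⟨⟨by linarith [hq.1], by linarith [hq.2]⟩, ?_⟩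
      have : p + (qr ε p - p) = qr ε p := by ring
      rw [this, klBer_eq_klf hp hp1 (lt_trans hp hq.1) (le_of_lt hq.2)]
      exact hqe
  rw [hset, csInf_singleton]

section lamdir
variable {ε p q : ℝ}

/-- the auxiliary g -/
noncomputable def gfun (p q lam : ℝ) : ℝ :=
  q * (Real.log (p + lam) - Real.log p) - Real.log (1 + lam)

lemma log_one_add_div {p lam : ℝ} (hp : 0 < p) (hl : 0 ≤ lam) :
    Real.log (1 + lam / p) = Real.log (p + lam) - Real.log p := by
  rw [show (1 : ℝ) + lam / p = (p + lam) / p by field_simp, Real.log_div (by positivity) (ne_of_gt hp)]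

lemma gfun_hasDerivAt {p q lam : ℝ} (hp : 0 < p) (hl : 0 < lam) :
    HasDerivAt (gfun p q) (q / (p + lam) - 1 / (1 + lam)) lam := by
  have h1 : HasDerivAt (fun l : ℝ => Real.log (p + l)) (1 / (p + lam)) lam := by
    have := (Real.hasDerivAt_log (x := p + lam) (by positivity)).comp lam
      ((hasDerivAt_id lam).const_add p)
    simpa [one_div, Function.comp_def] using this
  have h2 : HasDerivAt (fun l : ℝ => Real.log (1 + l)) (1 / (1 + lam)) lam := by
    have := (Real.hasDerivAt_log (x := 1 + lam) (by positivity)).comp lam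
      ((hasDerivAt_id lam).const_add 1)
    simpa [one_div, Function.comp_def] using this
  have H := (((h1.sub_const (Real.log p)).const_mul q).sub h2)
  refine H.congr_deriv ?_
  rw [mul_one_div]

lemma gfun_continuousOn {p q : ℝ} (hp : 0 < p) :
    ContinuousOn (gfun p q) (Set.Ici 0) := by
  apply ContinuousOn.sub
  · apply ContinuousOn.mul continuousOn_const
    apply ContinuousOn.sub _ continuousOn_const
    apply ContinuousOn.log (by fun_prop)
    intro x hx; simp only [Set.mem_Ici] at hx; positivity
  · apply ContinuousOn.log (by fun_prop)
    intro x hx; simp only [Set.mem_Ici] at hx; positivity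

lemma gfun_le {p q lam : ℝ} (hp : 0 < p) (hpq : p < q) (hq1 : q < 1) (hl : 0 < lam) :
    gfun p q lam ≤ gfun p q ((q - p) / (1 - q)) := by
  set ls := (q - p) / (1 - q) with hls
  have hq1' : 0 < 1 - q := by linarith
  have hls0 : 0 < ls := div_pos (by linarith) hq1'
  -- derivative sign: q/(p+l) - 1/(1+l) has sign of (q-p) - l(1-q) = (1-q)(ls - l)
  have hcanc : ls * (1 - q) = q - p := div_mul_cancel₀ _ (ne_of_gt hq1')
  have hsign : ∀ l : ℝ, 0 < l → (l ≤ ls → 0 ≤ q / (p + l) - 1 / (1 + l)) ∧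
      (ls ≤ l → q / (p + l) - 1 / (1 + l) ≤ 0) := by
    intro l hl0
    have hpl : 0 < p + l := by linarith
    have h1l : 0 < 1 + l := by linarith
    constructor
    · intro hlle
      have hkey : l * (1 - q) ≤ q - p := by
        calc l * (1 - q) ≤ ls * (1 - q) := by
              exact mul_le_mul_of_nonneg_right hlle (le_of_lt hq1')
          _ = q - p := hcanc
      rw [sub_nonneg, div_le_div_iff₀ h1l hpl]
      nlinarith
    · intro hlge
      have hkey : q - p ≤ l * (1 - q) := by
        calc q - p = ls * (1 - q) := hcanc.symm
          _ ≤ l * (1 - q) := mul_le_mul_of_nonneg_right hlge (le_of_lt hq1')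
      rw [sub_nonpos, div_le_div_iff₀ hpl h1l]
      nlinarith
  rcases le_total lam ls with h | h
  · have hmono : MonotoneOn (gfun p q) (Set.Icc 0 ls) := by
      apply monotoneOn_of_deriv_nonneg (convex_Icc 0 ls)
        ((gfun_continuousOn hp).mono Set.Icc_subset_Ici_self)
      · intro x hx
        rw [interior_Icc] at hx
        exact (gfun_hasDerivAt hp hx.1).differentiableAt.differentiableWithinAt
      · intro x hx
        rw [interior_Icc] at hx
        rw [(gfun_hasDerivAt hp hx.1).deriv]
        exact (hsign x hx.1).1 (le_of_lt hx.2)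
    exact hmono (Set.mem_Icc.2 ⟨le_of_lt hl, h⟩) (Set.mem_Icc.2 ⟨le_of_lt hls0, le_refl _⟩) h
  · have hanti : AntitoneOn (gfun p q) (Set.Ici ls) := by
      apply antitoneOn_of_deriv_nonpos (convex_Ici ls)
        ((gfun_continuousOn hp).mono (Set.Ici_subset_Ici.2 (le_of_lt hls0)))
      · intro x hx
        rw [interior_Ici] at hx
        exact (gfun_hasDerivAt hp (lt_trans hls0 hx)).differentiableAt.differentiableWithinAt
      · intro x hx
        rw [interior_Ici] at hx
        rw [(gfun_hasDerivAt hp (lt_trans hls0 hx)).deriv]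
        exact (hsign x (lt_trans hls0 hx)).2 (le_of_lt hx)
    exact hanti (Set.mem_Ici.2 (le_refl _)) (Set.mem_Ici.2 h) h
end lamdir

lemma gfun_at_ls {p q : ℝ} (hp : 0 < p) (hpq : p < q) (hq1 : q < 1) :
    gfun p q ((q - p) / (1 - q)) = klf p q := by
  set ls := (q - p) / (1 - q) with hls
  have hq1' : 0 < 1 - q := by linarith
  have hp1' : 0 < 1 - p := by linarith
  have hq0 : 0 < q := lt_trans hp hpq
  have h1 : p + ls = q * (1 - p) / (1 - q) := by rw [hls]; field_simp; ring
  have h2 : 1 + ls = (1 - p) / (1 - q) := by rw [hls]; field_simp; ring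
  rw [gfun, h1, h2, Real.log_div (by positivity) (ne_of_gt hq1'),
    Real.log_mul (ne_of_gt hq0) (ne_of_gt hp1'),
    Real.log_div (ne_of_gt hp1') (ne_of_gt hq1'), klf]
  ring

lemma upos {p lam : ℝ} (hp : 0 < p) (hl : 0 < lam) :
    0 < Real.log (p + lam) - Real.log p :=
  sub_pos.mpr (Real.log_lt_log hp (by linarith))

lemma Delta_eq_at_ls {ε p q : ℝ} (hp : 0 < p) (hpq : p < q) (hq1 : q < 1)
    (hklf : klf p q = ε) :
    DeltaEps ε p ((q - p) / (1 - q)) = q - p := by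
  set ls := (q - p) / (1 - q) with hls
  have hq1' : 0 < 1 - q := by linarith
  have hls0 : 0 < ls := div_pos (by linarith) hq1'
  have hu : Real.log (1 + ls / p) = Real.log (p + ls) - Real.log p :=
    log_one_add_div hp (le_of_lt hls0)
  have hu0 : 0 < Real.log (p + ls) - Real.log p := upos hp hls0
  have hnum : Real.log (1 + ls) + ε = q * (Real.log (p + ls) - Real.log p) := by
    have := gfun_at_ls hp hpq hq1
    rw [hklf] at this
    rw [gfun] at this
    linarith
  rw [DeltaEps, hu, hnum, mul_div_assoc, div_self (ne_of_gt hu0), mul_one]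

lemma Delta_ge_of_root {ε p q lam : ℝ} (hp : 0 < p) (hpq : p < q) (hq1 : q < 1)
    (hklf : klf p q = ε) (hl : 0 < lam) :
    q - p ≤ DeltaEps ε p lam := by
  have hu : Real.log (1 + lam / p) = Real.log (p + lam) - Real.log p :=
    log_one_add_div hp (le_of_lt hl)
  have hu0 : 0 < Real.log (p + lam) - Real.log p := upos hp hl
  have hg : gfun p q lam ≤ ε := by
    rw [← hklf, ← gfun_at_ls hp hpq hq1]
    exact gfun_le hp hpq hq1 hl
  rw [gfun] at hg
  have hnum : q * (Real.log (p + lam) - Real.log p) ≤ Real.log (1 + lam) + ε := by linarith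
  rw [DeltaEps, hu]
  have : q ≤ (Real.log (1 + lam) + ε) / (Real.log (p + lam) - Real.log p) :=
    (le_div_iff₀ hu0).mpr (by linarith)
  linarith


section pdir

lemma log_one_add_ge {x : ℝ} (hx : 0 ≤ x) : 2 * x / (2 + x) ≤ Real.log (1 + x) := by
  have hder : ∀ y : ℝ, 0 ≤ y → HasDerivAt (fun y : ℝ => Real.log (1 + y) - 2 * y / (2 + y))
      (1 / (1 + y) - 4 / (2 + y) ^ 2) y := by
    intro y hy
    have h1 : HasDerivAt (fun y : ℝ => Real.log (1 + y)) (1 / (1 + y)) y := by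
      have := (Real.hasDerivAt_log (x := 1 + y) (by positivity)).comp y
        ((hasDerivAt_id y).const_add 1)
      simpa [one_div, Function.comp_def] using this
    have h2 : HasDerivAt (fun y : ℝ => 2 * y / (2 + y)) (4 / (2 + y) ^ 2) y := by
      have hn : HasDerivAt (fun y : ℝ => 2 * y) 2 y := by
        simpa using (hasDerivAt_id y).const_mul 2
      have hd : HasDerivAt (fun y : ℝ => 2 + y) 1 y := (hasDerivAt_id y).const_add 2
      have := hn.div hd (by positivity)
      refine this.congr_deriv ?_
      field_simp
      ring
    exact h1.sub h2
  have hmono : MonotoneOn (fun y : ℝ => Real.log (1 + y) - 2 * y / (2 + y)) (Set.Ici 0) := by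
    apply monotoneOn_of_deriv_nonneg (convex_Ici 0)
    · intro y hy
      exact (hder y hy).continuousAt.continuousWithinAt
    · intro y hy
      rw [interior_Ici] at hy
      exact (hder y (le_of_lt hy)).differentiableAt.differentiableWithinAt
    · intro y hy
      rw [interior_Ici] at hy
      rw [(hder y (le_of_lt hy)).deriv]
      have hy0 : 0 < y := hy
      rw [sub_nonneg, div_le_div_iff₀ (by positivity) (by positivity)]
      nlinarith [sq_nonneg y]
  have := hmono (Set.mem_Ici.2 (le_refl (0:ℝ))) (Set.mem_Ici.2 hx) hx
  simp only [add_zero, mul_zero, zero_div, Real.log_one, sub_zero] at this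
  linarith [this]

noncomputable def ufun (lam r : ℝ) : ℝ := Real.log (r + lam) - Real.log r
noncomputable def Mfun (lam r : ℝ) : ℝ := r * (r + lam) * (ufun lam r) ^ 2
noncomputable def Fd (ε lam r : ℝ) : ℝ := (Real.log (1 + lam) + ε) * lam / Mfun lam r - 1

lemma ufun_pos {lam r : ℝ} (hr : 0 < r) (hl : 0 < lam) : 0 < ufun lam r :=
  sub_pos.mpr (Real.log_lt_log hr (by linarith))

lemma ufun_hasDerivAt {lam r : ℝ} (hr : 0 < r) (hl : 0 < lam) :
    HasDerivAt (ufun lam) (1 / (r + lam) - 1 / r) r := by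
  have h1 : HasDerivAt (fun x : ℝ => Real.log (x + lam)) (1 / (r + lam)) r := by
    have := (Real.hasDerivAt_log (x := r + lam) (by positivity)).comp r
      ((hasDerivAt_id r).add_const lam)
    simpa [one_div, Function.comp_def] using this
  have h2 := Real.hasDerivAt_log (ne_of_gt hr)
  exact (h1.sub h2).congr_deriv (by simp [one_div])

lemma Mfun_pos {lam r : ℝ} (hr : 0 < r) (hl : 0 < lam) : 0 < Mfun lam r := by
  rw [Mfun]
  have := ufun_pos hr hl
  positivity

lemma Mfun_hasDerivAt {lam r : ℝ} (hr : 0 < r) (hl : 0 < lam) :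
    HasDerivAt (Mfun lam) (ufun lam r * ((2 * r + lam) * ufun lam r - 2 * lam)) r := by
  have h1 : HasDerivAt (fun x : ℝ => x * (x + lam)) (2 * r + lam) r := by
    have := (hasDerivAt_id r).mul ((hasDerivAt_id r).add_const lam)
    refine this.congr_deriv ?_
    simp only [id_eq, one_mul, mul_one]
    ring
  have h2 : HasDerivAt (fun x : ℝ => (ufun lam x) ^ 2)
      (2 * ufun lam r * (1 / (r + lam) - 1 / r)) r := by
    have := (ufun_hasDerivAt hr hl).pow 2
    refine this.congr_deriv ?_
    ring
  have H := h1.mul h2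
  have heq : Mfun lam = fun x : ℝ => (x * (x + lam)) * (ufun lam x) ^ 2 := by
    funext x; rw [Mfun]
  rw [heq]
  refine H.congr_deriv ?_
  have hrl : (r : ℝ) + lam ≠ 0 := by positivity
  field_simp
  ring

lemma Mfun_monotoneOn {lam c : ℝ} (hc : 0 < c) (hl : 0 < lam) :
    MonotoneOn (Mfun lam) (Set.Ici c) := by
  apply monotoneOn_of_deriv_nonneg (convex_Ici c)
  · intro x hx
    exact (Mfun_hasDerivAt (lt_of_lt_of_le hc hx) hl).continuousAt.continuousWithinAt
  · intro x hx
    rw [interior_Ici] at hx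
    exact (Mfun_hasDerivAt (lt_trans hc hx) hl).differentiableAt.differentiableWithinAt
  · intro x hx
    rw [interior_Ici] at hx
    have hx0 : 0 < x := lt_trans hc hx
    rw [(Mfun_hasDerivAt hx0 hl).deriv]
    have hu := ufun_pos hx0 hl
    apply mul_nonneg (le_of_lt hu)
    have hkey : 2 * lam / (2 * x + lam) ≤ ufun lam x := by
      have hlog := log_one_add_ge (x := lam / x) (by positivity)
      have hux : ufun lam x = Real.log (1 + lam / x) := by
        rw [ufun, log_one_add_div hx0 (le_of_lt hl)]
      rw [hux]
      have heq2 : 2 * lam / (2 * x + lam) = 2 * (lam / x) / (2 + lam / x) := by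
        rw [div_eq_div_iff (by positivity) (by positivity)]
        field_simp
      rw [heq2]; exact hlog
    rw [sub_nonneg]
    have h3 : (2 * x + lam) * (2 * lam / (2 * x + lam)) ≤ (2 * x + lam) * ufun lam x :=
      mul_le_mul_of_nonneg_left hkey (by positivity)
    rw [mul_div_cancel₀ _ (by positivity : (2 * x + lam) ≠ 0)] at h3
    exact h3

end pdir


section Fdir
variable {ε lam : ℝ}

lemma Delta_eq_u {ε lam r : ℝ} (hr : 0 < r) (hl : 0 < lam) :
    DeltaEps ε r lam = (Real.log (1 + lam) + ε) / ufun lam r - r := by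
  rw [DeltaEps, ufun, log_one_add_div hr (le_of_lt hl)]

lemma F_hasDerivAt {ε lam r : ℝ} (hr : 0 < r) (hl : 0 < lam) :
    HasDerivAt (fun x => DeltaEps ε x lam) (Fd ε lam r) r := by
  set L := Real.log (1 + lam) + ε with hL
  have hev : (fun x => DeltaEps ε x lam) =ᶠ[nhds r] fun x => L / ufun lam x - x := by
    filter_upwards [IsOpen.mem_nhds isOpen_Ioi (Set.mem_Ioi.2 hr)] with x hx
    exact Delta_eq_u hx hl
  have hu := ufun_hasDerivAt hr hl
  have hune : ufun lam r ≠ 0 := ne_of_gt (ufun_pos hr hl)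
  have h1 : HasDerivAt (fun x => L / ufun lam x - x)
      ((0 * ufun lam r - L * (1 / (r + lam) - 1 / r)) / (ufun lam r) ^ 2 - 1) r :=
    ((hasDerivAt_const r L).div hu hune).sub (hasDerivAt_id r)
  have h2 : (0 * ufun lam r - L * (1 / (r + lam) - 1 / r)) / (ufun lam r) ^ 2 - 1 = Fd ε lam r := by
    rw [Fd, Mfun, ← hL]
    have : (r:ℝ) + lam ≠ 0 := by positivity
    field_simp
    ring
  exact (h2 ▸ h1).congr_of_eventuallyEq hev

lemma Fd_antitone {ε lam c r s : ℝ} (hc : 0 < c) (hl : 0 < lam) (hL : 0 ≤ Real.log (1 + lam) + ε)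
    (hcr : c ≤ r) (hrs : r ≤ s) : Fd ε lam s ≤ Fd ε lam r := by
  rw [Fd, Fd]
  have hMr : 0 < Mfun lam r := Mfun_pos (lt_of_lt_of_le hc hcr) hl
  have hMs : 0 < Mfun lam s := Mfun_pos (lt_of_lt_of_le hc (le_trans hcr hrs)) hl
  have hM : Mfun lam r ≤ Mfun lam s :=
    Mfun_monotoneOn hc hl (Set.mem_Ici.2 hcr) (Set.mem_Ici.2 (le_trans hcr hrs)) hrs
  have : (Real.log (1 + lam) + ε) * lam / Mfun lam s ≤ (Real.log (1 + lam) + ε) * lam / Mfun lam r :=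
    div_le_div_of_nonneg_left (by positivity) hMr hM
  linarith

/-- If `Fd` is nonneg to the left of `ps` and nonpos to the right, `ps` maximizes `F` on `[a,b]`. -/
lemma F_max {ε lam a b ps x : ℝ} (ha : 0 < a) (hl : 0 < lam)
    (hL : 0 ≤ Real.log (1 + lam) + ε)
    (haps : a ≤ ps) (hpsb : ps ≤ b)
    (hup : a = ps ∨ 0 ≤ Fd ε lam ps) (hdown : ps = b ∨ Fd ε lam ps ≤ 0)
    (hax : a ≤ x) (hxb : x ≤ b) :
    DeltaEps ε x lam ≤ DeltaEps ε ps lam := by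
  rcases le_total x ps with hxps | hpsx
  · -- monotone on [a, ps]
    rcases hup with h | h
    · have : x = ps := le_antisymm hxps (h ▸ hax)
      rw [this]
    · have hmono : MonotoneOn (fun t => DeltaEps ε t lam) (Set.Icc a ps) := by
        apply monotoneOn_of_deriv_nonneg (convex_Icc a ps)
        · intro t ht
          exact (F_hasDerivAt (lt_of_lt_of_le ha ht.1) hl).continuousAt.continuousWithinAt
        · intro t ht
          rw [interior_Icc] at ht
          exact (F_hasDerivAt (lt_trans ha ht.1) hl).differentiableAt.differentiableWithinAt
        · intro t ht
          rw [interior_Icc] at ht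
          rw [(F_hasDerivAt (lt_trans ha ht.1) hl).deriv]
          exact le_trans h (Fd_antitone ha hl hL (le_of_lt ht.1) (le_of_lt ht.2))
      exact hmono (Set.mem_Icc.2 ⟨hax, hxps⟩) (Set.mem_Icc.2 ⟨haps, le_refl _⟩) hxps
  · -- antitone on [ps, b]
    rcases hdown with h | h
    · have : x = ps := le_antisymm (h ▸ hxb) hpsx
      rw [this]
    · have hanti : AntitoneOn (fun t => DeltaEps ε t lam) (Set.Icc ps b) := by
        have hps0 : 0 < ps := lt_of_lt_of_le ha haps
        apply antitoneOn_of_deriv_nonpos (convex_Icc ps b)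
        · intro t ht
          exact (F_hasDerivAt (lt_of_lt_of_le hps0 ht.1) hl).continuousAt.continuousWithinAt
        · intro t ht
          rw [interior_Icc] at ht
          exact (F_hasDerivAt (lt_trans hps0 ht.1) hl).differentiableAt.differentiableWithinAt
        · intro t ht
          rw [interior_Icc] at ht
          rw [(F_hasDerivAt (lt_trans hps0 ht.1) hl).deriv]
          exact le_trans (Fd_antitone ha hl hL haps (le_of_lt ht.1)) h
      exact hanti (Set.mem_Icc.2 ⟨le_refl _, hpsb⟩) (Set.mem_Icc.2 ⟨hpsx, hxb⟩) hpsx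

end Fdir


noncomputable def sfun (ε p : ℝ) : ℝ :=
  (qr ε p - p) - p * (1 - p) *
    (Real.log (qr ε p) - Real.log p + Real.log (1 - p) - Real.log (1 - qr ε p))

lemma Fd_at_root {ε p : ℝ} (hε : 0 < ε) (hp : 0 < p) (hpe : p < Real.exp (-ε)) :
    Fd ε ((qr ε p - p) / (1 - qr ε p)) p =
      sfun ε p / (p * (1 - p) *
        (Real.log (qr ε p) - Real.log p + Real.log (1 - p) - Real.log (1 - qr ε p))) ∧
    0 < Real.log (qr ε p) - Real.log p + Real.log (1 - p) - Real.log (1 - qr ε p) := by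
  obtain ⟨hqm, hqe⟩ := qr_spec hε hp hpe
  set q := qr ε p with hqdef
  set U := Real.log q - Real.log p + Real.log (1 - p) - Real.log (1 - q) with hUdef
  set ls := (q - p) / (1 - q) with hlsdef
  have hpq : p < q := hqm.1
  have hq1 : q < 1 := hqm.2
  have hq0 : 0 < q := lt_trans hp hpq
  have hq1' : 0 < 1 - q := by linarith
  have hp1' : 0 < 1 - p := by linarith
  have hls0 : 0 < ls := div_pos (by linarith) hq1'
  have hpls : p + ls = q * (1 - p) / (1 - q) := by
    rw [hlsdef]; field_simp; ring
  have hUeq : ufun ls p = U := by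
    rw [ufun, hpls, Real.log_div (by positivity) (ne_of_gt hq1'),
      Real.log_mul (ne_of_gt hq0) (ne_of_gt hp1'), hUdef]
    ring
  have hU0 : 0 < U := hUeq ▸ ufun_pos hp hls0
  refine ⟨?_, hU0⟩
  have hgf := gfun_at_ls hp hpq hq1
  rw [hqe] at hgf
  rw [gfun] at hgf
  rw [← hlsdef] at hgf
  have hX : Real.log (p + ls) - Real.log p = U := by
    have := hUeq; rwa [ufun] at this
  have hL : Real.log (1 + ls) + ε = q * U := by
    rw [hX] at hgf; linarith
  rw [Fd, Mfun, hUeq, hL, sfun, ← hqdef, ← hUdef, hpls, hlsdef]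
  have hU' : U ≠ 0 := ne_of_gt hU0
  field_simp

lemma Fd_nonneg_of_sfun {ε p : ℝ} (hε : 0 < ε) (hp : 0 < p) (hpe : p < Real.exp (-ε))
    (hs : 0 ≤ sfun ε p) : 0 ≤ Fd ε ((qr ε p - p) / (1 - qr ε p)) p := by
  obtain ⟨heq, hU0⟩ := Fd_at_root hε hp hpe
  rw [heq]
  have hp1 : p < 1 := lt_trans hpe (by rw [Real.exp_lt_one_iff]; linarith)
  have : 0 < p * (1 - p) := by nlinarith
  positivity

lemma Fd_nonpos_of_sfun {ε p : ℝ} (hε : 0 < ε) (hp : 0 < p) (hpe : p < Real.exp (-ε))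
    (hs : sfun ε p ≤ 0) : Fd ε ((qr ε p - p) / (1 - qr ε p)) p ≤ 0 := by
  obtain ⟨heq, hU0⟩ := Fd_at_root hε hp hpe
  rw [heq]
  have hp1 : p < 1 := lt_trans hpe (by rw [Real.exp_lt_one_iff]; linarith)
  apply div_nonpos_of_nonpos_of_nonneg hs
  have : 0 < p * (1 - p) := by nlinarith
  positivity


lemma qr_continuousAt {ε p : ℝ} (hε : 0 < ε) (hp : 0 < p) (hpe : p < Real.exp (-ε)) :
    ContinuousAt (qr ε) p := by
  have hp1 : p < 1 := lt_trans hpe (by rw [Real.exp_lt_one_iff]; linarith)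
  obtain ⟨hqm, hqe⟩ := qr_spec hε hp hpe
  set q0 := qr ε p with hq0def
  rw [ContinuousAt, Metric.tendsto_nhds]
  intro δ hδ
  set δ' := min δ (min ((q0 - p) / 2) ((1 - q0) / 2)) with hδ'def
  have hδ'0 : 0 < δ' := by
    apply lt_min hδ
    apply lt_min
    · have := hqm.1; linarith
    · have := hqm.2; linarith
  have hδ'1 : δ' ≤ (q0 - p) / 2 := le_trans (min_le_right _ _) (min_le_left _ _)
  have hδ'2 : δ' ≤ (1 - q0) / 2 := le_trans (min_le_right _ _) (min_le_right _ _)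
  set y1 := q0 - δ' with hy1def
  set y2 := q0 + δ' with hy2def
  have hpy1 : p < y1 := by rw [hy1def]; have := hqm.1; linarith
  have hy1q : y1 < q0 := by rw [hy1def]; linarith
  have hqy2 : q0 < y2 := by rw [hy2def]; linarith
  have hy21 : y2 < 1 := by rw [hy2def]; have := hqm.2; linarith
  have h1 : klf p y1 < ε := by
    rw [← hqe]
    exact klf_strictMonoOn hp hp1 (Set.mem_Icc.2 ⟨le_of_lt hpy1, by linarith⟩)
      (Set.mem_Icc.2 ⟨le_of_lt hqm.1, le_of_lt hqm.2⟩) hy1q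
  have h2 : ε < klf p y2 := by
    rw [← hqe]
    exact klf_strictMonoOn hp hp1 (Set.mem_Icc.2 ⟨le_of_lt hqm.1, le_of_lt hqm.2⟩)
      (Set.mem_Icc.2 ⟨by nlinarith [hqm.1], le_of_lt hy21⟩) hqy2
  have hc : ∀ y : ℝ, ContinuousAt (fun p' => klf p' y) p := by
    intro y
    have l1 : ContinuousAt (fun p' : ℝ => Real.log p') p := Real.continuousAt_log (ne_of_gt hp)
    have l2 : ContinuousAt (fun p' : ℝ => Real.log (1 - p')) p := by
      have := (Real.continuousAt_log (x := 1 - p) (by linarith)).comp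
        ((continuous_const.sub continuous_id).continuousAt (x := p))
      exact this
    have : ContinuousAt (fun p' : ℝ =>
        y * Real.log y - y * Real.log p' + (1 - y) * Real.log (1 - y)
          - (1 - y) * Real.log (1 - p')) p :=
      ((continuousAt_const.sub (continuousAt_const.mul l1)).add continuousAt_const).sub
        (continuousAt_const.mul l2)
    exact this
  have e1 : ∀ᶠ p' in nhds p, klf p' y1 < ε := (hc y1).eventually_lt_const h1
  have e2 : ∀ᶠ p' in nhds p, ε < klf p' y2 := (hc y2).eventually_const_lt h2
  have e3 : ∀ᶠ p' in nhds p, p' ∈ Set.Ioo 0 (min (Real.exp (-ε)) y1) :=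
    IsOpen.eventually_mem isOpen_Ioo (Set.mem_Ioo.2 ⟨hp, lt_min hpe hpy1⟩)
  filter_upwards [e1, e2, e3] with p' h1' h2' h3'
  obtain ⟨hp'0, hp'lt⟩ := Set.mem_Ioo.1 h3'
  have hp'e : p' < Real.exp (-ε) := lt_of_lt_of_le hp'lt (min_le_left _ _)
  have hp'y1 : p' < y1 := lt_of_lt_of_le hp'lt (min_le_right _ _)
  have hp'1 : p' < 1 := by linarith
  obtain ⟨hqm', hqe'⟩ := qr_spec hε hp'0 hp'e
  set q' := qr ε p' with hq'def
  have hy1q' : y1 < q' := by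
    by_contra hcon
    push_neg at hcon
    rcases lt_or_eq_of_le hcon with hlt | heq
    · have := klf_strictMonoOn hp'0 hp'1
        (Set.mem_Icc.2 ⟨le_of_lt hqm'.1, le_of_lt hqm'.2⟩)
        (Set.mem_Icc.2 ⟨le_of_lt hp'y1, by linarith⟩) hlt
      rw [hqe'] at this
      linarith
    · rw [← heq] at h1'
      rw [hqe'] at h1'
      linarith
  have hq'y2 : q' < y2 := by
    by_contra hcon
    push_neg at hcon
    rcases lt_or_eq_of_le hcon with hlt | heq
    · have := klf_strictMonoOn hp'0 hp'1
        (Set.mem_Icc.2 ⟨by linarith, le_of_lt hy21⟩)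
        (Set.mem_Icc.2 ⟨le_of_lt hqm'.1, le_of_lt hqm'.2⟩) hlt
      rw [hqe'] at this
      linarith
    · rw [heq] at h2'
      rw [hqe'] at h2'
      linarith
  rw [Real.dist_eq, abs_sub_lt_iff]
  constructor
  · rw [hy2def] at hq'y2
    have : δ' ≤ δ := min_le_left _ _
    linarith
  · rw [hy1def] at hy1q'
    have : δ' ≤ δ := min_le_left _ _
    linarith

lemma sfun_continuousAt {ε p : ℝ} (hε : 0 < ε) (hp : 0 < p) (hpe : p < Real.exp (-ε)) :
    ContinuousAt (sfun ε) p := by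
  have hp1 : p < 1 := lt_trans hpe (by rw [Real.exp_lt_one_iff]; linarith)
  obtain ⟨hqm, hqe⟩ := qr_spec hε hp hpe
  have hqc := qr_continuousAt hε hp hpe
  have hq0 : (0:ℝ) < qr ε p := lt_trans hp hqm.1
  have hq1 : qr ε p < 1 := hqm.2
  have l1 : ContinuousAt (fun p' : ℝ => Real.log (qr ε p')) p :=
    (Real.continuousAt_log (ne_of_gt hq0)).comp hqc
  have l2 : ContinuousAt (fun p' : ℝ => Real.log (1 - qr ε p')) p := by
    have h5 : ContinuousAt (fun p' : ℝ => 1 - qr ε p') p := continuousAt_const.sub hqc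
    exact ContinuousAt.comp (x := p) (g := Real.log) (f := fun p' : ℝ => 1 - qr ε p')
      (Real.continuousAt_log (show (1 : ℝ) - qr ε p ≠ 0 by linarith)) h5
  have l3 : ContinuousAt (fun p' : ℝ => Real.log p') p := Real.continuousAt_log (ne_of_gt hp)
  have l4 : ContinuousAt (fun p' : ℝ => Real.log (1 - p')) p :=
    (Real.continuousAt_log (x := 1 - p) (by linarith)).comp
      ((continuous_const.sub continuous_id).continuousAt (x := p))
  have : ContinuousAt (fun p' : ℝ => (qr ε p' - p') - p' * (1 - p') *
      (Real.log (qr ε p') - Real.log p' + Real.log (1 - p') - Real.log (1 - qr ε p'))) p := by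
    apply ContinuousAt.sub (hqc.sub continuousAt_id)
    apply ContinuousAt.mul (continuousAt_id.mul (continuousAt_const.sub continuousAt_id))
    exact ((l1.sub l3).add l4).sub l2
  exact this

/-- **Lemma 3** (saddle point): for every non-empty closed interval
`P = [a,b] ⊆ (0, e^{-ε})` there exists `(p⋆, λ⋆) ∈ P × (0,∞)` with
`Δ_ε(p⋆,λ⋆) = inf_{λ>0} Δ_ε(p⋆,λ) = sup_{p∈P} Δ_ε(p,λ⋆) = ω(p⋆,ε)`. -/
theorem saddle_point_lemma (ε : ℝ) (hε : 0 < ε) (a b : ℝ)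
    (ha : 0 < a) (hab : a ≤ b) (hb : b < Real.exp (-ε)) :
    ∃ pstar lamstar : ℝ, pstar ∈ Set.Icc a b ∧ 0 < lamstar ∧
      DeltaEps ε pstar lamstar = (⨅ lam : Set.Ioi (0 : ℝ), DeltaEps ε pstar lam) ∧
      DeltaEps ε pstar lamstar = (⨆ p : Set.Icc a b, DeltaEps ε p lamstar) ∧
      DeltaEps ε pstar lamstar = omegaKL pstar ε := by
  have hpsex : ∃ ps, ps ∈ Set.Icc a b ∧ (a = ps ∨ 0 ≤ sfun ε ps) ∧ (ps = b ∨ sfun ε ps ≤ 0) := by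
    by_cases hsa : sfun ε a ≤ 0
    · exact ⟨a, ⟨le_refl a, hab⟩, Or.inl rfl, Or.inr hsa⟩
    · by_cases hsb : 0 ≤ sfun ε b
      · exact ⟨b, ⟨hab, le_refl b⟩, Or.inr hsb, Or.inl rfl⟩
      · push_neg at hsa hsb
        have hcont : ContinuousOn (sfun ε) (Set.Icc a b) := fun x hx =>
          (sfun_continuousAt hε (lt_of_lt_of_le ha hx.1)
            (lt_of_le_of_lt hx.2 hb)).continuousWithinAt
        have h0 : (0:ℝ) ∈ Set.Icc (sfun ε b) (sfun ε a) :=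
          Set.mem_Icc.2 ⟨le_of_lt hsb, le_of_lt hsa⟩
        obtain ⟨ps, hps, hval⟩ := intermediate_value_Icc' hab hcont h0
        exact ⟨ps, hps, Or.inr hval.ge, Or.inr hval.le⟩
  obtain ⟨ps, hpsm, hup, hdown⟩ := hpsex
  have hps0 : 0 < ps := lt_of_lt_of_le ha hpsm.1
  have hpse : ps < Real.exp (-ε) := lt_of_le_of_lt hpsm.2 hb
  obtain ⟨hqm, hqe⟩ := qr_spec hε hps0 hpse
  set q := qr ε ps with hqdef
  set ls := (q - ps) / (1 - q) with hlsdef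
  have h1q : 0 < 1 - q := by have := hqm.2; linarith
  have hls0 : 0 < ls := div_pos (by have := hqm.1; linarith) h1q
  have hval : DeltaEps ε ps ls = q - ps := Delta_eq_at_ls hps0 hqm.1 hqm.2 hqe
  have hL : 0 ≤ Real.log (1 + ls) + ε := by
    have : 0 ≤ Real.log (1 + ls) := Real.log_nonneg (by linarith)
    linarith
  refine ⟨ps, ls, hpsm, hls0, ?_, ?_, ?_⟩
  · apply le_antisymm
    · apply le_ciInf
      rintro ⟨l, hl⟩
      rw [hval]
      exact Delta_ge_of_root hps0 hqm.1 hqm.2 hqe hl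
    · refine ciInf_le (f := fun lam : ↥(Set.Ioi (0:ℝ)) => DeltaEps ε ps ↑lam) ⟨q - ps, ?_⟩ ⟨ls, hls0⟩
      rintro x ⟨⟨l, hl⟩, rfl⟩
      exact Delta_ge_of_root hps0 hqm.1 hqm.2 hqe hl
  · have hFmax : ∀ x ∈ Set.Icc a b, DeltaEps ε x ls ≤ DeltaEps ε ps ls := by
      intro x hx
      refine F_max ha hls0 hL hpsm.1 hpsm.2 ?_ ?_ hx.1 hx.2
      · rcases hup with h | h
        · exact Or.inl h
        · exact Or.inr (Fd_nonneg_of_sfun hε hps0 hpse h)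
      · rcases hdown with h | h
        · exact Or.inl h
        · exact Or.inr (Fd_nonpos_of_sfun hε hps0 hpse h)
    haveI : Nonempty ↥(Set.Icc a b) := ⟨⟨a, Set.mem_Icc.2 ⟨le_refl a, hab⟩⟩⟩
    apply le_antisymm
    · exact le_ciSup (f := fun p : ↥(Set.Icc a b) => DeltaEps ε ↑p ls)
        ⟨DeltaEps ε ps ls, by
          rintro x ⟨⟨y, hy⟩, rfl⟩
          exact hFmax y hy⟩ ⟨ps, hpsm⟩
    · exact ciSup_le fun x => hFmax x.1 x.2
  · rw [hval, omegaKL_eq hε hps0 hpse]
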